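/- Consider a finite MDP with discount $\gamma \in (0,1)$. Suppose policies $\pi_t$, $Q$-estimates $Q_t$, and the next policies $\pi_{t+1}$ satisfy, for all $t$, $\|\mathcal{H}_{\pi_{t+1}}(Q_t) - \mathcal{H}(Q_t)\|_\infty \le \varepsilon_t$. Then the value-function errors $\zeta_t = \|Q^* - Q^{\pi_t}\|_\infty$ satisfy the recursion $\zeta_{t+1} \le \gamma \zeta_t + \frac{2\gamma\|Q^{\pi_t} - Q_t\|_\infty + \varepsilon_t}{1-\gamma}$, and hence $\zeta_T \le \gamma^T \zeta_0 + \frac{2\gamma}{1-\gamma}\sum_{t=0}^{T-1}\gamma^{T-1-t}\|Q^{\pi_t}-Q_t\|_\infty + \frac{1}{1-\gamma}\sum_{t=0}^{T-1}\gamma^{T-1-t}\varepsilon_t$. -/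

import Mathlib

open Finset

/-- The Bellman operator of a policy `π` on a finite MDP. -/
noncomputable def bellmanPolicy {S A : Type} [Fintype S] [Fintype A]
    (R : S → A → ℝ) (P : S → A → S → ℝ) (γ : ℝ) (π : S → A → ℝ)
    (Q : S × A → ℝ) : S × A → ℝ :=
  fun p => R p.1 p.2 + γ * ∑ s', P p.1 p.2 s' * ∑ a', π s' a' * Q (s', a')

/-- The Bellman optimality operator on a finite MDP. -/
noncomputable def bellmanOpt {S A : Type} [Fintype S] [Fintype A] [Nonempty A]
    (R : S → A → ℝ) (P : S → A → S → ℝ) (γ : ℝ)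
    (Q : S × A → ℝ) : S × A → ℝ :=
  fun p => R p.1 p.2 + γ * ∑ s', P p.1 p.2 s' *
    (Finset.univ.sup' Finset.univ_nonempty (fun a' => Q (s', a')))


/-- monotone + constant shift for the policy Bellman operator -/
lemma bp_mono_shift {S A : Type} [Fintype S] [Fintype A]
    (R : S → A → ℝ) (P : S → A → S → ℝ) (γ : ℝ) (π : S → A → ℝ)
    (hγ0 : 0 ≤ γ) (hPpos : ∀ s a s', 0 ≤ P s a s') (hPsum : ∀ s a, ∑ s', P s a s' = 1)
    (hπpos : ∀ s a, 0 ≤ π s a) (hπsum : ∀ s, ∑ a, π s a = 1)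
    {Q Q' : S × A → ℝ} {d : ℝ} (h : ∀ q, Q q ≤ Q' q + d) (p : S × A) :
    bellmanPolicy R P γ π Q p ≤ bellmanPolicy R P γ π Q' p + γ * d := by
  unfold bellmanPolicy
  have inner : ∀ s', (∑ a', π s' a' * Q (s', a')) ≤ (∑ a', π s' a' * Q' (s', a')) + d := by
    intro s'
    have h1 : ∑ a', π s' a' * Q (s', a')
        ≤ ∑ a', (π s' a' * Q' (s', a') + π s' a' * d) := by
      apply Finset.sum_le_sum; intro a' _
      have := h (s', a'); nlinarith [hπpos s' a']
    have h2 : ∑ a', (π s' a' * Q' (s', a') + π s' a' * d)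
        = (∑ a', π s' a' * Q' (s', a')) + d := by
      rw [Finset.sum_add_distrib, ← Finset.sum_mul, hπsum, one_mul]
    linarith
  have key : ∑ s', P p.1 p.2 s' * ∑ a', π s' a' * Q (s', a')
      ≤ (∑ s', P p.1 p.2 s' * ∑ a', π s' a' * Q' (s', a')) + d := by
    have h1 : ∑ s', P p.1 p.2 s' * ∑ a', π s' a' * Q (s', a')
        ≤ ∑ s', (P p.1 p.2 s' * (∑ a', π s' a' * Q' (s', a')) + P p.1 p.2 s' * d) := by
      apply Finset.sum_le_sum; intro s' _
      have := inner s'; nlinarith [hPpos p.1 p.2 s']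
    have h2 : ∑ s', (P p.1 p.2 s' * (∑ a', π s' a' * Q' (s', a')) + P p.1 p.2 s' * d)
        = (∑ s', P p.1 p.2 s' * ∑ a', π s' a' * Q' (s', a')) + d := by
      rw [Finset.sum_add_distrib, ← Finset.sum_mul, hPsum, one_mul]
    linarith
  nlinarith [mul_le_mul_of_nonneg_left key hγ0]

/-- monotone + constant shift for the optimality Bellman operator -/
lemma bo_mono_shift {S A : Type} [Fintype S] [Fintype A] [Nonempty A]
    (R : S → A → ℝ) (P : S → A → S → ℝ) (γ : ℝ)
    (hγ0 : 0 ≤ γ) (hPpos : ∀ s a s', 0 ≤ P s a s') (hPsum : ∀ s a, ∑ s', P s a s' = 1)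
    {Q Q' : S × A → ℝ} {d : ℝ} (h : ∀ q, Q q ≤ Q' q + d) (p : S × A) :
    bellmanOpt R P γ Q p ≤ bellmanOpt R P γ Q' p + γ * d := by
  unfold bellmanOpt
  have inner : ∀ s' : S, (Finset.univ.sup' Finset.univ_nonempty (fun a' => Q (s', a')))
      ≤ (Finset.univ.sup' Finset.univ_nonempty (fun a' => Q' (s', a'))) + d := by
    intro s'
    apply Finset.sup'_le
    intro a' _
    exact (h (s', a')).trans (add_le_add_left (Finset.le_sup' (fun a' => Q' (s', a')) (Finset.mem_univ a')) d)
  have key : ∑ s', P p.1 p.2 s' * (Finset.univ.sup' Finset.univ_nonempty (fun a' => Q (s', a')))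
      ≤ (∑ s', P p.1 p.2 s' * (Finset.univ.sup' Finset.univ_nonempty (fun a' => Q' (s', a')))) + d := by
    have h1 : ∑ s', P p.1 p.2 s' * (Finset.univ.sup' Finset.univ_nonempty (fun a' => Q (s', a')))
        ≤ ∑ s', (P p.1 p.2 s' * (Finset.univ.sup' Finset.univ_nonempty (fun a' => Q' (s', a'))) + P p.1 p.2 s' * d) := by
      apply Finset.sum_le_sum; intro s' _
      have := inner s'; nlinarith [hPpos p.1 p.2 s']
    have h2 : ∑ s', (P p.1 p.2 s' * (Finset.univ.sup' Finset.univ_nonempty (fun a' => Q' (s', a'))) + P p.1 p.2 s' * d)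
        = (∑ s', P p.1 p.2 s' * (Finset.univ.sup' Finset.univ_nonempty (fun a' => Q' (s', a')))) + d := by
      rw [Finset.sum_add_distrib, ← Finset.sum_mul, hPsum, one_mul]
    linarith
  nlinarith [mul_le_mul_of_nonneg_left key hγ0]

/-- the policy operator is dominated by the optimality operator -/
lemma bp_le_bo {S A : Type} [Fintype S] [Fintype A] [Nonempty A]
    (R : S → A → ℝ) (P : S → A → S → ℝ) (γ : ℝ) (π : S → A → ℝ)
    (hγ0 : 0 ≤ γ) (hPpos : ∀ s a s', 0 ≤ P s a s')
    (hπpos : ∀ s a, 0 ≤ π s a) (hπsum : ∀ s, ∑ a, π s a = 1)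
    (Q : S × A → ℝ) (p : S × A) :
    bellmanPolicy R P γ π Q p ≤ bellmanOpt R P γ Q p := by
  unfold bellmanPolicy bellmanOpt
  have inner : ∀ s' : S, (∑ a', π s' a' * Q (s', a'))
      ≤ Finset.univ.sup' Finset.univ_nonempty (fun a' => Q (s', a')) := by
    intro s'
    have h1 : ∑ a', π s' a' * Q (s', a')
        ≤ ∑ a', π s' a' * Finset.univ.sup' Finset.univ_nonempty (fun a' => Q (s', a')) := by
      apply Finset.sum_le_sum; intro a' _
      exact mul_le_mul_of_nonneg_left (Finset.le_sup' (fun a' => Q (s', a')) (Finset.mem_univ a')) (hπpos s' a')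
    have h2 : ∑ a', π s' a' * Finset.univ.sup' Finset.univ_nonempty (fun a' => Q (s', a'))
        = Finset.univ.sup' Finset.univ_nonempty (fun a' => Q (s', a')) := by
      rw [← Finset.sum_mul, hπsum, one_mul]
    linarith
  have key : ∑ s', P p.1 p.2 s' * ∑ a', π s' a' * Q (s', a')
      ≤ ∑ s', P p.1 p.2 s' * Finset.univ.sup' Finset.univ_nonempty (fun a' => Q (s', a')) := by
    apply Finset.sum_le_sum; intro s' _
    exact mul_le_mul_of_nonneg_left (inner s') (hPpos p.1 p.2 s')
  nlinarith [mul_le_mul_of_nonneg_left key hγ0]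
theorem stmt_7 {S A : Type} [Fintype S] [Fintype A] [Nonempty S] [Nonempty A]
    (R : S → A → ℝ) (P : S → A → S → ℝ) (γ : ℝ) (hγ : γ ∈ Set.Ioo (0:ℝ) 1)
    (hPpos : ∀ s a s', 0 ≤ P s a s') (hPsum : ∀ s a, ∑ s', P s a s' = 1)
    (π : ℕ → S → A → ℝ)
    (hπpos : ∀ t s a, 0 ≤ π t s a) (hπsum : ∀ t s, ∑ a, π t s a = 1)
    (Qpi : ℕ → S × A → ℝ)
    (hQpi : ∀ t, bellmanPolicy R P γ (π t) (Qpi t) = Qpi t)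
    (Qstar : S × A → ℝ) (hQstar : bellmanOpt R P γ Qstar = Qstar)
    (hopt : ∀ t p, Qpi t p ≤ Qstar p)
    (Qt : ℕ → S × A → ℝ) (ε : ℕ → ℝ)
    (hε : ∀ t, ‖bellmanPolicy R P γ (π (t+1)) (Qt t) - bellmanOpt R P γ (Qt t)‖ ≤ ε t) :
    (∀ t, ‖Qstar - Qpi (t+1)‖ ≤ γ * ‖Qstar - Qpi t‖
        + (2 * γ * ‖Qpi t - Qt t‖ + ε t) / (1 - γ))
    ∧ (∀ T : ℕ, ‖Qstar - Qpi T‖ ≤ γ ^ T * ‖Qstar - Qpi 0‖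
        + (2 * γ / (1 - γ)) * ∑ t ∈ Finset.range T, γ ^ (T - 1 - t) * ‖Qpi t - Qt t‖
        + (1 / (1 - γ)) * ∑ t ∈ Finset.range T, γ ^ (T - 1 - t) * ε t) := by
  obtain ⟨hγ0, hγ1⟩ := hγ
  have hγ0' : (0:ℝ) ≤ γ := le_of_lt hγ0
  have h1γ : (0:ℝ) < 1 - γ := by linarith
  have hεpos : ∀ t, 0 ≤ ε t := fun t => le_trans (norm_nonneg _) (hε t)
  -- pointwise error bound for hε
  have hεpt : ∀ t p, |bellmanPolicy R P γ (π (t+1)) (Qt t) p - bellmanOpt R P γ (Qt t) p| ≤ ε t := by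
    intro t p
    have := norm_le_pi_norm (bellmanPolicy R P γ (π (t+1)) (Qt t) - bellmanOpt R P γ (Qt t)) p
    simpa [Real.norm_eq_abs] using this.trans (hε t)
  set e : ℕ → ℝ := fun t => ‖Qpi t - Qt t‖ with he
  have hept : ∀ t p, |Qpi t p - Qt t p| ≤ e t := by
    intro t p
    have := norm_le_pi_norm (Qpi t - Qt t) p
    simpa [Real.norm_eq_abs] using this
  set ζ : ℕ → ℝ := fun t => ‖Qstar - Qpi t‖ with hζ
  have hζpt : ∀ t p, |Qstar p - Qpi t p| ≤ ζ t := by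
    intro t p
    have := norm_le_pi_norm (Qstar - Qpi t) p
    simpa [Real.norm_eq_abs] using this
  set c : ℕ → ℝ := fun t => 2 * γ * e t + ε t with hc
  have hcpos : ∀ t, 0 ≤ c t := by
    intro t
    have : (0:ℝ) ≤ e t := norm_nonneg _
    have := hεpos t
    simp only [hc]
    nlinarith
  -- key: B_{π_{t+1}}(Qpi t) ≥ Qpi t - c t  pointwise
  have hkey : ∀ t p, Qpi t p - c t ≤ bellmanPolicy R P γ (π (t+1)) (Qpi t) p := by
    intro t p
    have s1 : bellmanPolicy R P γ (π (t+1)) (Qt t) p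
        ≤ bellmanPolicy R P γ (π (t+1)) (Qpi t) p + γ * e t := by
      apply bp_mono_shift R P γ _ hγ0' hPpos hPsum (hπpos (t+1)) (hπsum (t+1))
      intro q; have := hept t q; have := abs_le.1 (hept t q); linarith [this.2]
    have s2 : bellmanOpt R P γ (Qt t) p ≤ bellmanPolicy R P γ (π (t+1)) (Qt t) p + ε t := by
      have := abs_le.1 (hεpt t p); linarith [this.1]
    have s3 : bellmanPolicy R P γ (π t) (Qt t) p ≤ bellmanOpt R P γ (Qt t) p :=
      bp_le_bo R P γ (π t) hγ0' hPpos (hπpos t) (hπsum t) _ p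
    have s4 : bellmanPolicy R P γ (π t) (Qpi t) p
        ≤ bellmanPolicy R P γ (π t) (Qt t) p + γ * e t := by
      apply bp_mono_shift R P γ _ hγ0' hPpos hPsum (hπpos t) (hπsum t)
      intro q; have := abs_le.1 (hept t q); linarith [this.1]
    have s5 : bellmanPolicy R P γ (π t) (Qpi t) p = Qpi t p := by rw [hQpi t]
    simp only [hc]
    linarith
  -- approximate policy improvement: Qpi (t+1) ≥ Qpi t - c t / (1-γ)
  have hapi : ∀ t q, Qpi t q ≤ Qpi (t+1) q + c t / (1 - γ) := by
    intro t
    obtain ⟨p0, _, hp0⟩ := Finset.exists_min_image Finset.univ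
      (fun p => Qpi (t+1) p - Qpi t p) Finset.univ_nonempty
    set d : ℝ := Qpi (t+1) p0 - Qpi t p0 with hd
    have hdmin : ∀ q, d ≤ Qpi (t+1) q - Qpi t q := fun q => hp0 q (Finset.mem_univ q)
    have h2 : bellmanPolicy R P γ (π (t+1)) (Qpi t) p0
        ≤ bellmanPolicy R P γ (π (t+1)) (Qpi (t+1)) p0 + γ * (-d) := by
      apply bp_mono_shift R P γ _ hγ0' hPpos hPsum (hπpos (t+1)) (hπsum (t+1))
      intro q; have := hdmin q; linarith
    have h3 : bellmanPolicy R P γ (π (t+1)) (Qpi (t+1)) p0 = Qpi (t+1) p0 := by rw [hQpi (t+1)]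
    have h4 := hkey t p0
    have hdge : γ * d - c t ≤ d := by linarith
    have hdlb : -(c t) / (1 - γ) ≤ d := by
      rw [div_le_iff₀ h1γ]; nlinarith
    intro q
    have := hdmin q
    have : -(c t) / (1 - γ) ≤ Qpi (t+1) q - Qpi t q := le_trans hdlb this
    have hne : c t / (1-γ) = -(-(c t)/(1-γ)) := by ring
    rw [hne]; linarith
  -- the per-step recursion, pointwise
  have hrec : ∀ t, ζ (t+1) ≤ γ * ζ t + c t / (1 - γ) := by
    intro t
    have hpt : ∀ p, Qstar p - Qpi (t+1) p ≤ γ * ζ t + c t / (1 - γ) := by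
      intro p
      have t1 : bellmanOpt R P γ Qstar p ≤ bellmanOpt R P γ (Qpi t) p + γ * ζ t := by
        apply bo_mono_shift R P γ hγ0' hPpos hPsum
        intro q; have := abs_le.1 (hζpt t q); linarith [this.2]
      have t2a : bellmanOpt R P γ (Qpi t) p ≤ bellmanOpt R P γ (Qt t) p + γ * e t := by
        apply bo_mono_shift R P γ hγ0' hPpos hPsum
        intro q; have := abs_le.1 (hept t q); linarith [this.2]
      have t2b : bellmanOpt R P γ (Qt t) p
          ≤ bellmanPolicy R P γ (π (t+1)) (Qt t) p + ε t := by
        have := abs_le.1 (hεpt t p); linarith [this.1]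
      have t2c : bellmanPolicy R P γ (π (t+1)) (Qt t) p
          ≤ bellmanPolicy R P γ (π (t+1)) (Qpi t) p + γ * e t := by
        apply bp_mono_shift R P γ _ hγ0' hPpos hPsum (hπpos (t+1)) (hπsum (t+1))
        intro q; have := abs_le.1 (hept t q); linarith [this.2]
      have t3 : bellmanPolicy R P γ (π (t+1)) (Qpi t) p
          ≤ bellmanPolicy R P γ (π (t+1)) (Qpi (t+1)) p + γ * (c t / (1 - γ)) := by
        apply bp_mono_shift R P γ _ hγ0' hPpos hPsum (hπpos (t+1)) (hπsum (t+1))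
        exact hapi t
      have h5 : bellmanOpt R P γ Qstar p = Qstar p := by rw [hQstar]
      have h6 : bellmanPolicy R P γ (π (t+1)) (Qpi (t+1)) p = Qpi (t+1) p := by rw [hQpi (t+1)]
      have hsum : Qstar p - Qpi (t+1) p ≤ γ * ζ t + c t + γ * (c t / (1-γ)) := by
        simp only [hc] at *
        linarith
      have hcc : c t + γ * (c t / (1-γ)) = c t / (1-γ) := by
        field_simp; ring
      linarith
    have hrhs : 0 ≤ γ * ζ t + c t / (1 - γ) := by
      have : (0:ℝ) ≤ ζ t := norm_nonneg _
      have := hcpos t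
      have : (0:ℝ) ≤ c t / (1-γ) := div_nonneg (hcpos t) (le_of_lt h1γ)
      nlinarith [norm_nonneg (Qstar - Qpi t)]
    have : ‖Qstar - Qpi (t+1)‖ ≤ γ * ζ t + c t / (1 - γ) := by
      apply (pi_norm_le_iff_of_nonneg hrhs).2
      intro q
      rw [Real.norm_eq_abs]
      have hge : 0 ≤ Qstar q - Qpi (t+1) q := by linarith [hopt (t+1) q]
      have : (Qstar - Qpi (t+1)) q = Qstar q - Qpi (t+1) q := rfl
      rw [this, abs_of_nonneg hge]
      exact hpt q
    exact this
  have part1 : ∀ t, ‖Qstar - Qpi (t+1)‖ ≤ γ * ‖Qstar - Qpi t‖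
      + (2 * γ * ‖Qpi t - Qt t‖ + ε t) / (1 - γ) := by
    intro t; exact hrec t
  refine ⟨part1, ?_⟩
  intro T
  induction T with
  | zero => simp
  | succ T ih =>
    have step := hrec T
    have hsum1 : ∀ (x : ℕ → ℝ), ∑ t ∈ Finset.range (T+1), γ ^ (T + 1 - 1 - t) * x t
        = γ * (∑ t ∈ Finset.range T, γ ^ (T - 1 - t) * x t) + x T := by
      intro x
      rw [Finset.sum_range_succ]
      have h1 : ∀ t ∈ Finset.range T, γ ^ (T + 1 - 1 - t) * x t
          = γ * (γ ^ (T - 1 - t) * x t) := by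
        intro t ht
        have ht' : t < T := Finset.mem_range.1 ht
        have : T + 1 - 1 - t = (T - 1 - t) + 1 := by omega
        rw [this, pow_succ]; ring
      rw [Finset.sum_congr rfl h1, ← Finset.mul_sum]
      have : T + 1 - 1 - T = 0 := by omega
      rw [this]; ring
    rw [hsum1 (fun t => ‖Qpi t - Qt t‖), hsum1 ε]
    have hγζ : γ * ζ T ≤ γ * (γ ^ T * ζ 0
        + (2 * γ / (1 - γ)) * ∑ t ∈ Finset.range T, γ ^ (T - 1 - t) * ‖Qpi t - Qt t‖
        + (1 / (1 - γ)) * ∑ t ∈ Finset.range T, γ ^ (T - 1 - t) * ε t) :=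
      mul_le_mul_of_nonneg_left ih hγ0'
    have hcsplit : c T / (1 - γ) = (2 * γ / (1 - γ)) * e T + (1 / (1 - γ)) * ε T := by
      simp only [hc]
      field_simp
    have final : ζ (T+1) ≤ γ ^ (T+1) * ζ 0
        + (2 * γ / (1 - γ)) * (γ * (∑ t ∈ Finset.range T, γ ^ (T - 1 - t) * ‖Qpi t - Qt t‖) + e T)
        + (1 / (1 - γ)) * (γ * (∑ t ∈ Finset.range T, γ ^ (T - 1 - t) * ε t) + ε T) := by
      have hpow : γ ^ (T+1) = γ * γ ^ T := by rw [pow_succ]; ring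
      rw [hpow]
      simp only [he] at *
      nlinarith [step, hγζ, hcsplit]
    exact final
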